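/- If φ is an irreducible non-satisfiable 3-CNF formula with m distinct clauses over n variables, then m ≤ (C(n,3) · 2ⁿ) / (2^(n−3) + C(n,3) − 1). -/

import Mathlib

/-- A 3-clause over `n` variables: a set of 3 literals (variable, sign)
with pairwise distinct variables. Sign `true` = positive literal. -/
abbrev Clause (n : ℕ) : Type :=
  {c : Finset (Fin n × Bool) // c.card = 3 ∧ (c.image Prod.fst).card = 3}

/-- Evaluation of a clause at an assignment: true iff some literal is true. -/
def Clause.eval {n : ℕ} (ψ : Clause n) (v : Fin n → Bool) : Bool :=
  decide (∃ l ∈ ψ.1, v l.1 = l.2)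

/-- The set `S(ψ)` of assignments falsifying `ψ`. -/
def falsSet {n : ℕ} (ψ : Clause n) : Finset (Fin n → Bool) :=
  Finset.univ.filter fun v => ψ.eval v = false

/-- A 3-CNF formula (a finite set of clauses) is unsatisfiable. -/
def Unsat {n : ℕ} (φ : Finset (Clause n)) : Prop :=
  ¬ ∃ v : Fin n → Bool, ∀ ψ ∈ φ, ψ.eval v = true

lemma card_agree (n : ℕ) (s : Finset (Fin n)) (g : Fin n → Bool) :
    (Finset.univ.filter fun v : Fin n → Bool => ∀ i ∈ s, v i = g i).card = 2 ^ (n - s.card) := by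
  have h := Finset.card_bij'
    (i := fun (v : Fin n → Bool) (_ : v ∈ Finset.univ.filter fun v => ∀ i ∈ s, v i = g i) =>
      (fun j : ↥(sᶜ : Finset (Fin n)) => v j.1))
    (j := fun (w : ↥(sᶜ : Finset (Fin n)) → Bool) (_ : w ∈ Finset.univ) =>
      (fun i : Fin n => if h : i ∈ s then g i else w ⟨i, Finset.mem_compl.mpr h⟩))
    (hi := fun v hv => Finset.mem_univ _)
    (hj := ?_) (left_inv := ?_) (right_inv := ?_)
  · rw [h, Finset.card_univ, Fintype.card_fun, Fintype.card_coe, Finset.card_compl,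
      Fintype.card_fin, Fintype.card_bool]
  · intro w _
    simp only [Finset.mem_filter, Finset.mem_univ, true_and]
    intro i hi
    simp [hi]
  · intro v hv
    simp only [Finset.mem_filter, Finset.mem_univ, true_and] at hv
    funext i
    by_cases hi : i ∈ s
    · simp [hi, (hv i hi).symm]
    · simp [hi]
  · intro w _
    funext j
    have : ¬ (j.1 ∈ s) := Finset.mem_compl.mp j.2
    simp [this]

lemma clause_injOn {n : ℕ} (ψ : Clause n) : Set.InjOn Prod.fst (ψ.1 : Set (Fin n × Bool)) := by
  rw [← Finset.card_image_iff, ψ.2.2, ψ.2.1]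

lemma eval_false_iff {n : ℕ} (ψ : Clause n) (v : Fin n → Bool) :
    ψ.eval v = false ↔ ∀ l ∈ ψ.1, v l.1 = !l.2 := by
  rw [Clause.eval, decide_eq_false_iff_not]
  constructor
  · intro h l hl
    have hne : ¬ (v l.1 = l.2) := fun hc => h ⟨l, hl, hc⟩
    revert hne
    cases l.2 <;> cases hv : v l.1 <;> simp
  · rintro h ⟨l, hl, hc⟩
    have := h l hl
    rw [hc] at this
    exact (Bool.not_ne_self l.2).symm this

lemma falsSet_card {n : ℕ} (ψ : Clause n) : (falsSet ψ).card = 2 ^ (n - 3) := by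
  classical
  set s := ψ.1.image Prod.fst with hs
  set g : Fin n → Bool := fun i => if h : ∃ b, (i, b) ∈ ψ.1 then !h.choose else false with hg
  have hmem : ∀ i b, (i, b) ∈ ψ.1 → g i = !b := by
    intro i b hb
    have hex : ∃ b', (i, b') ∈ ψ.1 := ⟨b, hb⟩
    have hch : (i, hex.choose) ∈ ψ.1 := hex.choose_spec
    have heq : (i, hex.choose) = (i, b) := clause_injOn ψ hch hb rfl
    simp only [hg, dif_pos hex]
    rw [Prod.mk.injEq] at heq
    rw [heq.2]
  have key : falsSet ψ = Finset.univ.filter fun v : Fin n → Bool => ∀ i ∈ s, v i = g i := by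
    ext v
    simp only [falsSet, Finset.mem_filter, Finset.mem_univ, true_and, eval_false_iff]
    constructor
    · intro h i hi
      simp only [hs, Finset.mem_image] at hi
      obtain ⟨⟨i', b⟩, hb, hfst⟩ := hi
      subst hfst
      rw [h _ hb, hmem _ _ hb]
    · intro h l hl
      have hi : l.1 ∈ s := Finset.mem_image_of_mem _ hl
      rw [h _ hi, hmem l.1 l.2 hl]
  rw [key, card_agree, hs, ψ.2.2]

lemma clause_eq_of_false {n : ℕ} (ψ : Clause n) (v : Fin n → Bool)
    (h : ψ.eval v = false) :
    ψ.1 = (ψ.1.image Prod.fst).image (fun i => (i, !v i)) := by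
  rw [eval_false_iff] at h
  ext ⟨i, b⟩
  simp only [Finset.mem_image, Prod.mk.injEq, exists_exists_and_eq_and]
  constructor
  · intro hb
    refine ⟨(i, b), hb, rfl, ?_⟩
    rw [h _ hb, Bool.not_not]
  · rintro ⟨⟨i', b'⟩, hb', hi, hbeq⟩
    simp only at hi hbeq
    subst hi
    have := h _ hb'
    simp only at this
    subst hbeq
    rw [this, Bool.not_not]
    exact hb'

lemma count_le {n : ℕ} (φ : Finset (Clause n)) (v : Fin n → Bool) :
    (φ.filter fun ψ => ψ.eval v = false).card ≤ n.choose 3 := by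
  classical
  have h := Finset.card_le_card_of_injOn (f := fun ψ : Clause n => ψ.1.image Prod.fst)
    (s := φ.filter fun ψ => ψ.eval v = false)
    (t := Finset.powersetCard 3 (Finset.univ : Finset (Fin n)))
    (by
      intro ψ hψ
      rw [Finset.mem_coe, Finset.mem_powersetCard]
      exact ⟨Finset.subset_univ _, ψ.2.2⟩)
    (by
      intro ψ hψ ψ' hψ' heq
      simp only [Finset.coe_filter, Set.mem_setOf_eq] at hψ hψ'
      apply Subtype.ext
      have heq2 : ψ.1.image Prod.fst = ψ'.1.image Prod.fst := heq
      rw [clause_eq_of_false ψ v hψ.2, clause_eq_of_false ψ' v hψ'.2, heq2])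
  rwa [Finset.card_powersetCard, Finset.card_univ, Fintype.card_fin] at h

theorem stmt_9 (n : ℕ) (hn : 3 ≤ n) (φ : Finset (Clause n)) (hunsat : Unsat φ)
    (hins : ∀ ψ ∈ φ, ∃ v : Fin n → Bool, ∀ ψ' ∈ φ.erase ψ, Clause.eval ψ' v = true) :
    (φ.card : ℝ) ≤ (n.choose 3 * 2 ^ n) / (2 ^ (n - 3) + n.choose 3 - 1) := by
  classical
  set m := φ.card with hm
  -- pivot function
  set p : Clause n → (Fin n → Bool) := fun ψ =>
    if h : ψ ∈ φ then (hins ψ h).choose else fun _ => false with hp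
  have hpsat : ∀ ψ ∈ φ, ∀ ψ' ∈ φ.erase ψ, Clause.eval ψ' (p ψ) = true := by
    intro ψ hψ
    simp only [hp, dif_pos hψ]
    exact (hins ψ hψ).choose_spec
  have hpfals : ∀ ψ ∈ φ, ψ.eval (p ψ) = false := by
    intro ψ hψ
    by_contra h
    rw [Bool.not_eq_false] at h
    exact hunsat ⟨p ψ, fun ψ' hψ' => by
      by_cases he : ψ' = ψ
      · rw [he]; exact h
      · exact hpsat ψ hψ ψ' (Finset.mem_erase.mpr ⟨he, hψ'⟩)⟩
  have hponly : ∀ ψ ∈ φ, φ.filter (fun ψ' => Clause.eval ψ' (p ψ) = false) = {ψ} := by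
    intro ψ hψ
    ext ψ'
    simp only [Finset.mem_filter, Finset.mem_singleton]
    constructor
    · rintro ⟨hψ', hf⟩
      by_contra he
      have := hpsat ψ hψ ψ' (Finset.mem_erase.mpr ⟨he, hψ'⟩)
      rw [hf] at this
      exact Bool.false_ne_true this
    · rintro rfl
      exact ⟨hψ, hpfals _ hψ⟩
  have hpinj : Set.InjOn p ↑φ := by
    intro ψ hψ ψ' hψ' heq
    by_contra hne
    have h1 := hpsat ψ' hψ' ψ (Finset.mem_erase.mpr ⟨hne, hψ⟩)
    have h2 := hpfals ψ hψ
    rw [← heq] at h1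
    rw [h2] at h1
    exact Bool.false_ne_true h1
  set P : Finset (Fin n → Bool) := φ.image p with hP
  have hPcard : P.card = m := Finset.card_image_of_injOn hpinj
  have hmle : m ≤ 2 ^ n := by
    calc m = P.card := hPcard.symm
    _ ≤ (Finset.univ : Finset (Fin n → Bool)).card := Finset.card_le_card (Finset.subset_univ _)
    _ = 2 ^ n := by rw [Finset.card_univ, Fintype.card_fun, Fintype.card_fin, Fintype.card_bool]
  -- double counting
  have hdouble : m * 2 ^ (n - 3) =
      ∑ v : Fin n → Bool, (φ.filter fun ψ => ψ.eval v = false).card := by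
    have h1 : ∀ ψ ∈ φ, (falsSet ψ).card = 2 ^ (n - 3) := fun ψ _ => falsSet_card ψ
    calc m * 2 ^ (n - 3) = ∑ ψ ∈ φ, (falsSet ψ).card := by
          rw [Finset.sum_congr rfl h1, Finset.sum_const, smul_eq_mul]
      _ = ∑ ψ ∈ φ, ∑ v : Fin n → Bool, (if ψ.eval v = false then 1 else 0) := by
          refine Finset.sum_congr rfl fun ψ _ => ?_
          rw [falsSet, Finset.card_filter]
      _ = ∑ v : Fin n → Bool, ∑ ψ ∈ φ, (if ψ.eval v = false then 1 else 0) :=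
          Finset.sum_comm
      _ = ∑ v : Fin n → Bool, (φ.filter fun ψ => ψ.eval v = false).card := by
          refine Finset.sum_congr rfl fun v _ => ?_
          rw [Finset.card_filter]
  -- bound the sum
  have hbound : m * 2 ^ (n - 3) ≤ m + (2 ^ n - m) * n.choose 3 := by
    rw [hdouble]
    have hsplit : ∑ v : Fin n → Bool, (φ.filter fun ψ => ψ.eval v = false).card =
        (∑ v ∈ Finset.univ \ P, (φ.filter fun ψ => ψ.eval v = false).card) +
        (∑ v ∈ P, (φ.filter fun ψ => ψ.eval v = false).card) :=
      (Finset.sum_sdiff (Finset.subset_univ P)).symm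
    rw [hsplit]
    have hPsum : ∑ v ∈ P, (φ.filter fun ψ => ψ.eval v = false).card = m := by
      have : ∀ v ∈ P, (φ.filter fun ψ => ψ.eval v = false).card = 1 := by
        intro v hv
        obtain ⟨ψ, hψ, rfl⟩ := Finset.mem_image.mp hv
        rw [hponly ψ hψ, Finset.card_singleton]
      rw [Finset.sum_congr rfl this, Finset.sum_const, smul_eq_mul, mul_one, hPcard]
    have hrest : ∑ v ∈ Finset.univ \ P, (φ.filter fun ψ => ψ.eval v = false).card ≤
        (2 ^ n - m) * n.choose 3 := by
      calc ∑ v ∈ Finset.univ \ P, (φ.filter fun ψ => ψ.eval v = false).card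
          ≤ ∑ _v ∈ Finset.univ \ P, n.choose 3 :=
            Finset.sum_le_sum fun v _ => count_le φ v
        _ = (Finset.univ \ P).card * n.choose 3 := by rw [Finset.sum_const, smul_eq_mul]
        _ = (2 ^ n - m) * n.choose 3 := by
            rw [Finset.card_sdiff_of_subset (Finset.subset_univ P), Finset.card_univ, Fintype.card_fun,
              Fintype.card_fin, Fintype.card_bool, hPcard]
    omega
  -- pass to ℝ
  have hC1 : (1 : ℝ) ≤ (n.choose 3 : ℝ) := by
    exact_mod_cast Nat.one_le_iff_ne_zero.mpr (Nat.choose_pos hn).ne'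
  have hE1 : (1 : ℝ) ≤ (2 : ℝ) ^ (n - 3) := one_le_pow₀ (by norm_num)
  have hD : (0 : ℝ) < 2 ^ (n - 3) + (n.choose 3 : ℝ) - 1 := by linarith
  rw [le_div_iff₀ hD]
  have hRbound : (m : ℝ) * 2 ^ (n - 3) ≤ m + (2 ^ n - m) * n.choose 3 := by
    have := hbound
    have hcast : ((2 ^ n - m : ℕ) : ℝ) = 2 ^ n - m := by
      rw [Nat.cast_sub hmle]; push_cast; ring
    calc (m : ℝ) * 2 ^ (n - 3) = ((m * 2 ^ (n - 3) : ℕ) : ℝ) := by push_cast; ring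
      _ ≤ ((m + (2 ^ n - m) * n.choose 3 : ℕ) : ℝ) := by exact_mod_cast hbound
      _ = m + (2 ^ n - m) * n.choose 3 := by rw [Nat.cast_add, Nat.cast_mul, hcast]
  nlinarith [hRbound]
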